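/- Under the assumptions that 0 < α < β, y₀ = ε ∈ (0, γ), x₀ = 1 - ε, and 1 + (α/β)ln(α/(β(1-ε))) - α/β > γ, the minimal value of G over D_γ equals (α/(βγ))·(ln(α/β) - 1 + β/α - ln(x₀)) - 1, and this value is positive and strictly decreasing in γ. -/

import Mathlib

open Set MeasureTheory intervalIntegral
open scoped Interval


lemma exp_cont_key (g : ℝ → ℝ) (hg : Continuous g) (a b : ℝ) :
    ∫ x in a..b, g x * Real.exp (∫ t in a..x, g t)
      = Real.exp (∫ t in a..b, g t) - 1 := by
  have h1 : ∀ x : ℝ, HasDerivAt (fun u => ∫ t in a..u, g t) (g x) x := fun x =>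
    integral_hasDerivAt_right (hg.intervalIntegrable a x)
      (hg.stronglyMeasurableAtFilter _ _) hg.continuousAt
  have h2 : ∀ x : ℝ, HasDerivAt (fun u => Real.exp (∫ t in a..u, g t))
      (g x * Real.exp (∫ t in a..x, g t)) x := by
    intro x
    have := (Real.hasDerivAt_exp (∫ t in a..x, g t)).comp x (h1 x)
    rw [mul_comm]; exact this
  have h3 : IntervalIntegrable (fun x => g x * Real.exp (∫ t in a..x, g t)) volume a b := by
    apply Continuous.intervalIntegrable
    exact hg.mul ((Real.continuous_exp.comp (intervalIntegral.continuous_primitive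
      (fun i j => hg.intervalIntegrable i j) a)))
  have := integral_eq_sub_of_hasDerivAt (f := fun u => Real.exp (∫ t in a..u, g t))
    (f' := fun x => g x * Real.exp (∫ t in a..x, g t)) (fun x _ => h2 x) h3
  simpa using this

lemma exp_sub_exp_le {u v m : ℝ} (hu : u ≤ m) (hv : v ≤ m) :
    |Real.exp u - Real.exp v| ≤ Real.exp m * |u - v| := by
  have key : ∀ p q : ℝ, q ≤ p → p ≤ m → Real.exp p - Real.exp q ≤ Real.exp m * (p - q) := by
    intro p q hqp hpm
    have h4 : (1 : ℝ) - Real.exp (q - p) ≤ p - q := by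
      have := Real.add_one_le_exp (q - p); linarith
    have h2 : Real.exp q = Real.exp p * Real.exp (q - p) := by rw [← Real.exp_add]; ring_nf
    have e1 : Real.exp p ≤ Real.exp m := Real.exp_le_exp.2 hpm
    nlinarith [Real.exp_pos p, Real.exp_pos (q - p)]
  rcases le_total v u with h | h
  · rw [abs_of_nonneg (sub_nonneg.2 (Real.exp_le_exp.2 h)), abs_of_nonneg (sub_nonneg.2 h)]
    exact key u v h hu
  · rw [abs_of_nonpos (sub_nonpos.2 (Real.exp_le_exp.2 h)), abs_of_nonpos (sub_nonpos.2 h)]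
    have := key v u h hv; linarith

lemma abs_interval_le (h : ℝ → ℝ) (hh : Integrable h) (a x : ℝ) :
    |∫ t in a..x, h t| ≤ ∫ t, |h t| := by
  calc |∫ t in a..x, h t| ≤ ∫ t in Ι a x, |h t| := by
        simpa using intervalIntegral.norm_integral_le_integral_norm_uIoc
          (f := h) (a := a) (b := x) (μ := volume)
    _ ≤ ∫ t, |h t| :=
        setIntegral_le_integral hh.abs (Filter.Eventually.of_forall fun t => abs_nonneg _)

lemma exp_integral_key (f : ℝ → ℝ) (hf : Integrable f volume) (a b : ℝ) (hab : a ≤ b) :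
    ∫ x in a..b, f x * Real.exp (∫ t in a..x, f t)
      = Real.exp (∫ t in a..b, f t) - 1 := by
  set K := ∫ t, |f t| with hKdef
  have hK : 0 ≤ K := integral_nonneg fun t => abs_nonneg _
  set C := Real.exp (K + 1) with hCdef
  have hC : 0 < C := Real.exp_pos _
  set X := (∫ x in a..b, f x * Real.exp (∫ t in a..x, f t))
      - (Real.exp (∫ t in a..b, f t) - 1) with hXdef
  suffices H : ∀ δ : ℝ, 0 < δ → δ ≤ 1 → |X| ≤ (C * (K + 3)) * δ by
    have habs : |X| ≤ 0 := by
      apply le_of_forall_pos_le_add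
      intro ε hε
      have hM : 0 < C * (K + 3) := by positivity
      have hδ : 0 < min 1 (ε / (C * (K + 3))) := lt_min one_pos (by positivity)
      calc |X| ≤ (C * (K + 3)) * min 1 (ε / (C * (K + 3))) := H _ hδ (min_le_left _ _)
        _ ≤ (C * (K + 3)) * (ε / (C * (K + 3))) :=
            mul_le_mul_of_nonneg_left (min_le_right _ _) hM.le
        _ = ε := by field_simp
        _ ≤ 0 + ε := by linarith
    have : X = 0 := abs_eq_zero.mp (le_antisymm habs (abs_nonneg _))
    linarith [this, hXdef]
  intro δ hδ hδ1
  obtain ⟨g, gsupp, hgint, gcont, gint⟩ :=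
    hf.exists_hasCompactSupport_integral_sub_le hδ
  set Ff := fun x : ℝ => ∫ t in a..x, f t with hFfdef
  set Fg := fun x : ℝ => ∫ t in a..x, g t with hFgdef
  have hFfcont : Continuous Ff :=
    intervalIntegral.continuous_primitive (fun i j => hf.intervalIntegrable) a
  have hFgcont : Continuous Fg :=
    intervalIntegral.continuous_primitive (fun i j => gcont.intervalIntegrable i j) a
  have hfg : ∫ t, |f t - g t| ≤ δ := by simpa [Real.norm_eq_abs] using hgint
  have hFf : ∀ x, |Ff x| ≤ K := fun x => abs_interval_le f hf a x
  have hFfg : ∀ x, |Ff x - Fg x| ≤ δ := by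
    intro x
    have h1 : Ff x - Fg x = ∫ t in a..x, (f t - g t) := by
      rw [intervalIntegral.integral_sub (hf.intervalIntegrable)
        (gcont.intervalIntegrable a x)]
    rw [h1]
    exact (abs_interval_le _ (hf.sub gint) a x).trans hfg
  have hFg : ∀ x, |Fg x| ≤ K + δ := by
    intro x
    have := abs_sub_abs_le_abs_sub (Fg x) (Ff x)
    have h2 := hFfg x
    rw [abs_sub_comm] at h2
    linarith [hFf x]
  have hexpFf : ∀ x, Real.exp (Ff x) ≤ C := fun x =>
    Real.exp_le_exp.2 (by linarith [(abs_le.1 (hFf x)).2])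
  have hexpdiff : ∀ x, |Real.exp (Ff x) - Real.exp (Fg x)| ≤ C * δ := by
    intro x
    calc |Real.exp (Ff x) - Real.exp (Fg x)| ≤ C * |Ff x - Fg x| :=
          exp_sub_exp_le (by linarith [(abs_le.1 (hFf x)).2])
            (by linarith [(abs_le.1 (hFg x)).2])
      _ ≤ C * δ := mul_le_mul_of_nonneg_left (hFfg x) hC.le
  -- integrability
  have intf : Integrable (fun x => f x * Real.exp (Ff x)) volume := by
    have := hf.bdd_mul (Real.continuous_exp.comp hFfcont).aestronglyMeasurable
      (Filter.Eventually.of_forall fun x => by simpa [Real.norm_eq_abs, abs_of_pos (Real.exp_pos _)] using hexpFf x)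
    simpa [mul_comm] using this
  have intg : Integrable (fun x => g x * Real.exp (Fg x)) volume := by
    apply Continuous.integrable_of_hasCompactSupport
      (gcont.mul (Real.continuous_exp.comp hFgcont))
    exact gsupp.mul_right
  have hint2 : Integrable (fun t => |f t - g t|) volume := by
    simpa using (hf.sub gint).abs
  have hintgabs : ∫ t, |g t| ≤ K + δ := by
    calc ∫ t, |g t| ≤ ∫ t, (|f t| + |f t - g t|) := by
          apply integral_mono gint.abs (hf.abs.add hint2)
          intro t
          have h1 := abs_sub_abs_le_abs_sub (g t) (f t)
          rw [abs_sub_comm] at h1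
          simp only [Pi.add_apply]
          linarith
      _ = K + ∫ t, |f t - g t| := by rw [integral_add hf.abs hint2]
      _ ≤ K + δ := by linarith
  -- main estimate
  have hcont := exp_cont_key g gcont a b
  have hdiff1 : |(∫ x in a..b, f x * Real.exp (Ff x)) - ∫ x in a..b, g x * Real.exp (Fg x)|
      ≤ C * δ * (K + 2) := by
    rw [← intervalIntegral.integral_sub intf.intervalIntegrable intg.intervalIntegrable]
    calc |∫ x in a..b, (f x * Real.exp (Ff x) - g x * Real.exp (Fg x))|
        ≤ ∫ x in Ι a b, |f x * Real.exp (Ff x) - g x * Real.exp (Fg x)| := by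
          simpa [Real.norm_eq_abs] using
            intervalIntegral.norm_integral_le_integral_norm_uIoc
              (f := fun x => f x * Real.exp (Ff x) - g x * Real.exp (Fg x))
              (a := a) (b := b) (μ := volume)
      _ ≤ ∫ x in Ι a b, (C * |f x - g x| + (C * δ) * |g x|) := by
          apply setIntegral_mono_on
          · exact (intf.sub intg).abs.integrableOn
          · exact ((hint2.const_mul C).add (gint.abs.const_mul (C * δ))).integrableOn
          · exact measurableSet_uIoc
          · intro x _
            have step : |f x * Real.exp (Ff x) - g x * Real.exp (Fg x)|
                ≤ |f x - g x| * Real.exp (Ff x) + |g x| * |Real.exp (Ff x) - Real.exp (Fg x)| := by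
              have : f x * Real.exp (Ff x) - g x * Real.exp (Fg x)
                  = (f x - g x) * Real.exp (Ff x) + g x * (Real.exp (Ff x) - Real.exp (Fg x)) := by
                ring
              rw [this]
              calc |(f x - g x) * Real.exp (Ff x) + g x * (Real.exp (Ff x) - Real.exp (Fg x))|
                  ≤ |(f x - g x) * Real.exp (Ff x)| + |g x * (Real.exp (Ff x) - Real.exp (Fg x))| :=
                    abs_add_le _ _
                _ = |f x - g x| * Real.exp (Ff x) + |g x| * |Real.exp (Ff x) - Real.exp (Fg x)| := by
                    rw [abs_mul, abs_mul, abs_of_pos (Real.exp_pos _)]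
            calc |f x * Real.exp (Ff x) - g x * Real.exp (Fg x)|
                ≤ |f x - g x| * Real.exp (Ff x) + |g x| * |Real.exp (Ff x) - Real.exp (Fg x)| := step
              _ ≤ C * |f x - g x| + (C * δ) * |g x| := by
                  have h1 := mul_le_mul_of_nonneg_left (hexpFf x) (abs_nonneg (f x - g x))
                  have h2 := mul_le_mul_of_nonneg_left (hexpdiff x) (abs_nonneg (g x))
                  nlinarith [abs_nonneg (f x - g x), abs_nonneg (g x)]
      _ = C * (∫ x in Ι a b, |f x - g x|) + (C * δ) * ∫ x in Ι a b, |g x| := by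
          rw [integral_add (hint2.const_mul C).integrableOn
            ((gint.abs.const_mul (C * δ)).integrableOn)]
          rw [MeasureTheory.integral_const_mul, MeasureTheory.integral_const_mul]
      _ ≤ C * δ + (C * δ) * (K + δ) := by
          have e1 : ∫ x in Ι a b, |f x - g x| ≤ δ :=
            (setIntegral_le_integral (hf.sub gint).abs
              (Filter.Eventually.of_forall fun t => abs_nonneg _)).trans hfg
          have e2 : ∫ x in Ι a b, |g x| ≤ K + δ :=
            (setIntegral_le_integral gint.abs
              (Filter.Eventually.of_forall fun t => abs_nonneg _)).trans hintgabs
          have m1 := mul_le_mul_of_nonneg_left e1 hC.le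
          have m2 := mul_le_mul_of_nonneg_left e2 (mul_nonneg hC.le hδ.le)
          linarith
      _ ≤ C * δ * (K + 2) := by
          nlinarith [mul_nonneg (mul_nonneg hC.le hδ.le)
            (by linarith : (0:ℝ) ≤ 1 - δ)]
  have hdiff2 : |Real.exp (Ff b) - Real.exp (Fg b)| ≤ C * δ := hexpdiff b
  have hzero : (∫ x in a..b, g x * Real.exp (Fg x)) = Real.exp (Fg b) - 1 := hcont
  have hXeq : X = ((∫ x in a..b, f x * Real.exp (Ff x)) - ∫ x in a..b, g x * Real.exp (Fg x))
      + (Real.exp (Fg b) - Real.exp (Ff b)) := by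
    rw [hXdef, hzero]
    simp only [hFfdef, hFgdef]
    ring
  calc |X| ≤ C * δ * (K + 2) + C * δ := by
        rw [hXeq]
        have h1 := abs_add_le ((∫ x in a..b, f x * Real.exp (Ff x))
          - ∫ x in a..b, g x * Real.exp (Fg x)) (Real.exp (Fg b) - Real.exp (Ff b))
        have h2 : |Real.exp (Fg b) - Real.exp (Ff b)| ≤ C * δ := by
          rw [abs_sub_comm]; exact hdiff2
        linarith
    _ = (C * (K + 3)) * δ := by ring

lemma intervalIntegrable_of_bdd {f : ℝ → ℝ} (hm : Measurable f) {B : ℝ}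
    (hb : ∀ x, |f x| ≤ B) (p q : ℝ) : IntervalIntegrable f volume p q := by
  rw [intervalIntegrable_iff]
  apply Measure.integrableOn_of_bounded
  · exact ((measure_mono (Set.uIoc_subset_uIcc)).trans_lt measure_Icc_lt_top).ne
  · exact hm.aestronglyMeasurable
  · exact Filter.Eventually.of_forall fun x => by simpa [Real.norm_eq_abs] using hb x

lemma max_ge_mul {A e : ℝ} (he0 : 0 < e) (he1 : e ≤ 1) : A * e ≤ max A 0 := by
  rcases le_or_gt A 0 with h | h
  · exact (mul_nonpos_of_nonpos_of_nonneg h he0.le).trans (le_max_right _ _)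
  · calc A * e ≤ A * 1 := by nlinarith
      _ = A := mul_one A
      _ ≤ max A 0 := le_max_left _ _

lemma phi_deriv {c x : ℝ} (hx : 0 < x) :
    HasDerivAt (fun y : ℝ => y - c * Real.log y) (1 - c / x) x := by
  have h1 := (Real.hasDerivAt_log hx.ne').const_mul c
  have h2 := (hasDerivAt_id' x).sub h1
  exact h2.congr_deriv (by rw [div_eq_mul_inv])

lemma phi_mono {c x₀ : ℝ} (hc0 : 0 < c) :
    StrictMonoOn (fun y : ℝ => y - c * Real.log y) (Icc c x₀) := by
  apply strictMonoOn_of_deriv_pos (convex_Icc _ _)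
  · intro x hx
    exact ((phi_deriv (lt_of_lt_of_le hc0 hx.1)).continuousAt).continuousWithinAt
  · intro x hx
    rw [interior_Icc] at hx
    rw [(phi_deriv (hc0.trans hx.1)).deriv]
    have : c / x < 1 := (div_lt_one (hc0.trans hx.1)).2 hx.1
    linarith

lemma phi_FTC {c : ℝ} (γ : ℝ) (hc0 : 0 < c) {p : ℝ} (hp : c ≤ p) :
    (∫ u in c..p, γ⁻¹ * (1 - c / u))
      = γ⁻¹ * (p - c * Real.log p) - γ⁻¹ * (c - c * Real.log c) := by
  apply intervalIntegral.integral_eq_sub_of_hasDerivAt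
    (f := fun y => γ⁻¹ * (y - c * Real.log y))
  · intro u hu
    rw [uIcc_of_le hp] at hu
    exact (phi_deriv (lt_of_lt_of_le hc0 hu.1)).const_mul γ⁻¹
  · apply ContinuousOn.intervalIntegrable
    apply continuousOn_const.mul
    apply continuousOn_const.sub
    apply continuousOn_const.div continuousOn_id
    intro u hu
    rw [uIcc_of_le hp] at hu
    exact (lt_of_lt_of_le hc0 hu.1).ne'

lemma minimizer_exists (c γ ε x₀ : ℝ) (hc0 : 0 < c) (hε0 : 0 < ε) (hε1 : ε < 1)
    (hx₀ : x₀ = 1 - ε) (hγ : 0 < γ) (hεγ : ε < γ) (hxb : c < x₀)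
    (hpk : γ < 1 - c + c * (Real.log c - Real.log x₀)) :
    ∃ fs : ℝ → ℝ, IntegrableOn fs (Icc c x₀) volume ∧
      (∫ u in c..x₀, fs u) = Real.log (ε / γ) ∧
      (∀ x ∈ Icc c x₀, (∫ u in c..x, fs u) ≤ 0) ∧
      (∀ x ∈ Icc c x₀, 0 ≤ fs x + γ⁻¹ * Real.exp (-(∫ u in c..x, fs u))) ∧
      (∫ x in Icc c x₀,
          max (fs x + γ⁻¹ * (1 - c / x) * Real.exp (-(∫ u in c..x, fs u))) 0)
        = γ⁻¹ * ((1 - γ - c * Real.log x₀) - (c - c * Real.log c)) := by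
  have hx₀0 : 0 < x₀ := hc0.trans hxb
  set φ : ℝ → ℝ := fun y => y - c * Real.log y with hφdef
  set T := 1 - γ - c * Real.log x₀ with hTdef
  have hT1 : φ c < T := by simp only [hφdef, hTdef]; nlinarith
  have hT2 : T < φ x₀ := by simp only [hφdef, hTdef]; rw [hx₀]; linarith
  obtain ⟨xs, hxsmem, hxsT⟩ : ∃ xs ∈ Ioo c x₀, φ xs = T := by
    have h1 := intermediate_value_Ioo (f := φ) hxb.le (fun x hx =>
      ((phi_deriv (c := c) (lt_of_lt_of_le hc0 hx.1)).continuousAt).continuousWithinAt)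
    exact h1 ⟨hT1, hT2⟩
  obtain ⟨hxs1, hxs2⟩ := hxsmem
  have hxs0 : 0 < xs := hc0.trans hxs1
  set E : ℝ → ℝ := fun x => 1 - γ⁻¹ * (φ x - T) with hEdef
  have hExs : E xs = 1 := by simp [hEdef, hxsT]
  have hEx₀ : E x₀ = ε / γ := by
    have h : φ x₀ - T = γ - ε := by simp only [hφdef, hTdef]; rw [hx₀]; ring
    simp only [hEdef, h]
    field_simp
    ring
  have hφm : StrictMonoOn φ (Icc c x₀) := phi_mono hc0
  have hElb : ∀ x ∈ Icc xs x₀, ε / γ ≤ E x := by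
    intro x hx
    have h1 : φ x ≤ φ x₀ := by
      rcases eq_or_lt_of_le hx.2 with h | h
      · rw [h]
      · exact le_of_lt (hφm ⟨hxs1.le.trans hx.1, hx.2⟩ ⟨hxb.le, le_refl _⟩ h)
    have h2 := mul_le_mul_of_nonneg_left (sub_le_sub_right h1 T) (inv_pos.2 hγ).le
    have h3 : E x₀ ≤ E x := by simp only [hEdef]; linarith
    linarith [hEx₀ ▸ h3]
  have hEub : ∀ x ∈ Icc xs x₀, E x ≤ 1 := by
    intro x hx
    have h1 : φ xs ≤ φ x := by
      rcases eq_or_lt_of_le hx.1 with h | h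
      · rw [← h]
      · exact le_of_lt (hφm ⟨hxs1.le, hxs2.le⟩ ⟨hxs1.le.trans hx.1, hx.2⟩ h)
    have h2 := mul_le_mul_of_nonneg_left (sub_le_sub_right h1 T) (inv_pos.2 hγ).le
    have h3 : γ⁻¹ * (φ xs - T) = 0 := by rw [hxsT]; ring
    simp only [hEdef]
    linarith
  have hEpos : ∀ x ∈ Icc xs x₀, 0 < E x := fun x hx =>
    lt_of_lt_of_le (div_pos hε0 hγ) (hElb x hx)
  set fs : ℝ → ℝ := fun x =>
    if x ∈ Ioc xs x₀ then -(γ⁻¹ * (1 - c / x)) / E x else 0 with hfsdef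
  have hfsm : Measurable fs := by
    apply Measurable.ite measurableSet_Ioc _ measurable_const
    apply Measurable.div
    · exact (measurable_const.mul (measurable_const.sub
        (measurable_const.div measurable_id))).neg
    · exact measurable_const.sub (measurable_const.mul
        ((measurable_id.sub (measurable_const.mul Real.measurable_log)).sub measurable_const))
  have hfsb : ∀ x, |fs x| ≤ γ⁻¹ * (γ / ε) := by
    intro x
    simp only [hfsdef]
    split_ifs with h
    · have hx0 : 0 < x := hxs0.trans h.1
      have hE1 : 0 < E x := hEpos x ⟨h.1.le, h.2⟩
      have hE2 : ε / γ ≤ E x := hElb x ⟨h.1.le, h.2⟩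
      have h3 : 0 ≤ 1 - c / x := by
        have : c / x ≤ 1 := (div_le_one hx0).2 (hxs1.le.trans h.1.le)
        linarith
      have h4 : 1 - c / x ≤ 1 := by
        have : 0 ≤ c / x := le_of_lt (div_pos hc0 hx0)
        linarith
      rw [abs_div, abs_neg, abs_of_nonneg (by positivity), abs_of_pos hE1]
      rw [div_le_iff₀ hE1]
      have h5 : γ⁻¹ * (γ / ε) * (ε / γ) ≤ γ⁻¹ * (γ / ε) * E x :=
        mul_le_mul_of_nonneg_left hE2 (by positivity)
      have h6 : γ⁻¹ * (γ / ε) * (ε / γ) = γ⁻¹ := by field_simp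
      have h7 : γ⁻¹ * (1 - c / x) ≤ γ⁻¹ := by nlinarith [inv_pos.2 hγ]
      linarith
    · simp only [abs_zero]; positivity
  have hfsint : ∀ p q : ℝ, IntervalIntegrable fs volume p q :=
    intervalIntegrable_of_bdd hfsm hfsb
  have hFs0 : ∀ x, c ≤ x → x ≤ xs → (∫ u in c..x, fs u) = 0 := by
    intro x hx1 hx2
    rw [intervalIntegral.integral_congr (g := fun _ => (0 : ℝ)) ?_]
    · simp
    · intro u hu
      rw [uIcc_of_le hx1] at hu
      have : u ∉ Ioc xs x₀ := fun hmem => absurd hmem.1 (not_lt.2 (hu.2.trans hx2))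
      simp only [hfsdef]
      rw [if_neg this]
  have hFs1 : ∀ x, xs < x → x ≤ x₀ → (∫ u in c..x, fs u) = Real.log (E x) := by
    intro x hx1 hx2
    rw [← intervalIntegral.integral_add_adjacent_intervals (a := c) (b := xs) (c := x)
      (hfsint _ _) (hfsint _ _)]
    rw [hFs0 xs hxs1.le (le_refl xs), zero_add]
    have hEq : (∫ u in xs..x, fs u) = Real.log (E x) - Real.log (E xs) := by
      apply intervalIntegral.integral_eq_sub_of_hasDeriv_right
      · intro y hy
        rw [uIcc_of_le hx1.le] at hy
        have hy0 : 0 < y := hxs0.trans_le hy.1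
        have hyE : 0 < E y := hEpos y ⟨hy.1, hy.2.trans hx2⟩
        have hE' : HasDerivAt E (-(γ⁻¹ * (1 - c / y))) y := by
          have h1 := ((phi_deriv (c := c) hy0).sub_const T).const_mul γ⁻¹ |>.const_sub 1
          convert h1 using 1
        exact ((Real.continuousAt_log hyE.ne').comp hE'.continuousAt).continuousWithinAt
      · intro y hy
        rw [min_eq_left hx1.le, max_eq_right hx1.le] at hy
        have hy0 : 0 < y := hxs0.trans hy.1
        have hyE : 0 < E y := hEpos y ⟨hy.1.le, hy.2.le.trans hx2⟩
        have hE' : HasDerivAt E (-(γ⁻¹ * (1 - c / y))) y := by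
          have h1 := ((phi_deriv (c := c) hy0).sub_const T).const_mul γ⁻¹ |>.const_sub 1
          convert h1 using 1
        have hlogE := hE'.log hyE.ne'
        have hfseq : fs y = -(γ⁻¹ * (1 - c / y)) / E y := by
          simp only [hfsdef]
          rw [if_pos ⟨hy.1, hy.2.le.trans hx2⟩]
        rw [hfseq]
        exact hlogE.hasDerivWithinAt
      · exact hfsint xs x
    rw [hEq, hExs, Real.log_one, sub_zero]
  refine ⟨fs, ?_, ?_, ?_, ?_, ?_⟩
  · rw [integrableOn_Icc_iff_integrableOn_Ioc]
    exact (hfsint c x₀).1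
  · rw [hFs1 x₀ hxs2 (le_refl x₀), hEx₀]
  · intro x hx
    rcases le_or_gt x xs with h | h
    · rw [hFs0 x hx.1 h]
    · rw [hFs1 x h hx.2]
      have h1 : 0 < E x := hEpos x ⟨h.le, hx.2⟩
      exact Real.log_nonpos h1.le (hEub x ⟨h.le, hx.2⟩)
  · intro x hx
    rcases le_or_gt x xs with h | h
    · rw [hFs0 x hx.1 h]
      have hfs : fs x = 0 := by
        simp only [hfsdef]
        rw [if_neg (fun hmem => absurd hmem.1 (not_lt.2 h))]
      rw [hfs]
      simp [Real.exp_zero]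
      positivity
    · rw [hFs1 x h hx.2]
      have hE1 : 0 < E x := hEpos x ⟨h.le, hx.2⟩
      have hx0 : 0 < x := hxs0.trans h
      have hfs : fs x = -(γ⁻¹ * (1 - c / x)) / E x := by
        simp only [hfsdef]
        rw [if_pos ⟨h, hx.2⟩]
      rw [hfs, Real.exp_neg, Real.exp_log hE1]
      have hcx1 : c / x ≤ 1 := (div_le_one hx0).2 (hxs1.le.trans h.le)
      have key : -(γ⁻¹ * (1 - c / x)) / E x + γ⁻¹ * (E x)⁻¹ = γ⁻¹ * (c / x) / E x := by
        field_simp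
        ring
      rw [key]
      have : 0 ≤ γ⁻¹ * (c / x) := by positivity
      exact div_nonneg this hE1.le
  · -- value of the integral
    have hstep : ∀ x ∈ Icc c x₀,
        max (fs x + γ⁻¹ * (1 - c / x) * Real.exp (-(∫ u in c..x, fs u))) 0
          = (if x ∈ Icc c xs then γ⁻¹ * (1 - c / x) else 0) := by
      intro x hx
      rcases le_or_gt x xs with h | h
      · rw [hFs0 x hx.1 h]
        have hfs : fs x = 0 := by
          simp only [hfsdef]
          rw [if_neg (fun hmem => absurd hmem.1 (not_lt.2 h))]
        rw [hfs, if_pos ⟨hx.1, h⟩]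
        have hx0 : 0 < x := hc0.trans_le hx.1
        have hcx1 : c / x ≤ 1 := (div_le_one hx0).2 hx.1
        rw [neg_zero, Real.exp_zero, mul_one, zero_add]
        apply max_eq_left
        have : 0 ≤ 1 - c / x := by linarith
        positivity
      · rw [hFs1 x h hx.2]
        have hE1 : 0 < E x := hEpos x ⟨h.le, hx.2⟩
        have hfs : fs x = -(γ⁻¹ * (1 - c / x)) / E x := by
          simp only [hfsdef]
          rw [if_pos ⟨h, hx.2⟩]
        rw [hfs, Real.exp_neg, Real.exp_log hE1, if_neg (fun hmem => absurd h (not_lt.2 hmem.2))]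
        have key : -(γ⁻¹ * (1 - c / x)) / E x + γ⁻¹ * (1 - c / x) * (E x)⁻¹ = 0 := by
          field_simp
          ring
        rw [key]
        exact max_self 0
    rw [setIntegral_congr_fun measurableSet_Icc hstep]
    set h : ℝ → ℝ := fun x => if x ∈ Icc c xs then γ⁻¹ * (1 - c / x) else 0 with hhdef
    have hhm : Measurable h := by
      apply Measurable.ite measurableSet_Icc _ measurable_const
      exact measurable_const.mul (measurable_const.sub (measurable_const.div measurable_id))
    have hhb : ∀ x, |h x| ≤ γ⁻¹ := by
      intro x
      simp only [hhdef]
      split_ifs with hmem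
      · have hx0 : 0 < x := hc0.trans_le hmem.1
        have h1 : c / x ≤ 1 := (div_le_one hx0).2 hmem.1
        have h2 : 0 ≤ c / x := le_of_lt (div_pos hc0 hx0)
        have h3 : 0 ≤ γ⁻¹ * (1 - c / x) := mul_nonneg (inv_pos.2 hγ).le (by linarith)
        rw [abs_of_nonneg h3]
        nlinarith [inv_pos.2 hγ]
      · simp only [abs_zero]; positivity
    have hhint : ∀ p q : ℝ, IntervalIntegrable h volume p q :=
      intervalIntegrable_of_bdd hhm hhb
    rw [integral_Icc_eq_integral_Ioc,
      ← intervalIntegral.integral_of_le ((hxs1.trans hxs2).le : c ≤ x₀)]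
    rw [← intervalIntegral.integral_add_adjacent_intervals (a := c) (b := xs) (c := x₀)
      (hhint _ _) (hhint _ _)]
    have hz : (∫ u in xs..x₀, h u) = 0 := by
      rw [intervalIntegral.integral_of_le hxs2.le]
      rw [setIntegral_congr_fun measurableSet_Ioc (g := fun _ => (0:ℝ))
        (fun u hu => by
          simp only [hhdef]
          rw [if_neg (fun hmem => absurd hmem.2 (not_le.2 hu.1))])]
      simp
    have h1 : (∫ u in c..xs, h u) = ∫ u in c..xs, γ⁻¹ * (1 - c / u) := by
      apply intervalIntegral.integral_congr
      intro u hu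
      rw [uIcc_of_le hxs1.le] at hu
      simp only [hhdef]
      rw [if_pos hu]
    rw [hz, add_zero, h1, phi_FTC γ hc0 hxs1.le]
    have : xs - c * Real.log xs = T := hxsT
    rw [this, hTdef]
    ring

lemma lower_bound_key (c γ ε x₀ : ℝ) (hc0 : 0 < c) (hε0 : 0 < ε)
    (hx₀ : x₀ = 1 - ε) (hγ : 0 < γ) (hxb : c < x₀)
    (f : ℝ → ℝ) (hint : IntegrableOn f (Icc c x₀) volume)
    (hFx₀ : (∫ u in c..x₀, f u) = Real.log (ε / γ))
    (hFle : ∀ x ∈ Icc c x₀, (∫ u in c..x, f u) ≤ 0) :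
    γ⁻¹ * ((1 - γ - c * Real.log x₀) - (c - c * Real.log c))
      ≤ ∫ x in Icc c x₀,
          max (f x + γ⁻¹ * (1 - c / x) * Real.exp (-(∫ u in c..x, f u))) 0 := by
  set ft := (Icc c x₀).indicator f with hftdef
  have hfti : Integrable ft volume := hint.integrable_indicator measurableSet_Icc
  have hFteq : ∀ x ∈ Icc c x₀, (∫ u in c..x, f u) = (∫ u in c..x, ft u) := by
    intro x hx
    apply intervalIntegral.integral_congr
    intro u hu
    rw [uIcc_of_le hx.1] at hu
    have hm : u ∈ Icc c x₀ := ⟨hu.1, hu.2.trans hx.2⟩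
    simp [hftdef, Set.indicator_of_mem hm]
  set Ft := fun x : ℝ => ∫ u in c..x, ft u with hFtdef
  have hFtcont : Continuous Ft :=
    intervalIntegral.continuous_primitive (fun i j => hfti.intervalIntegrable) c
  set K := ∫ t, |ft t| with hKdef
  have hKb : ∀ x, |Ft x| ≤ K := fun x => abs_interval_le ft hfti c x
  have hexpbd : ∀ x, Real.exp (Ft x) ≤ Real.exp K :=
    fun x => Real.exp_le_exp.2 (abs_le.1 (hKb x)).2
  have hcongr : ∀ x ∈ Icc c x₀,
      max (f x + γ⁻¹ * (1 - c / x) * Real.exp (-(∫ u in c..x, f u))) 0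
        = max (ft x + γ⁻¹ * (1 - c / x) * Real.exp (-(Ft x))) 0 := by
    intro x hx
    rw [hFteq x hx]
    have hfx : f x = ft x := by simp [hftdef, Set.indicator_of_mem hx]
    rw [hfx]
  rw [setIntegral_congr_fun measurableSet_Icc hcongr]
  -- integrability facts
  have intP1 : Integrable (fun x => ft x * Real.exp (Ft x)) volume := by
    have := hfti.bdd_mul (c := Real.exp K) (Real.continuous_exp.comp hFtcont).aestronglyMeasurable
      (Filter.Eventually.of_forall fun x => by
        simpa [Real.norm_eq_abs, abs_of_pos (Real.exp_pos _)] using hexpbd x)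
    simpa [mul_comm] using this
  have contP2 : ContinuousOn (fun x : ℝ => γ⁻¹ * (1 - c / x)) (Icc c x₀) :=
    continuousOn_const.mul (continuousOn_const.sub (continuousOn_const.div
      continuousOn_id (fun u hu => (hc0.trans_le hu.1).ne')))
  have intP2 : IntegrableOn (fun x : ℝ => γ⁻¹ * (1 - c / x)) (Icc c x₀) volume :=
    contP2.integrableOn_Icc
  have intL : IntegrableOn
      (fun x => ft x * Real.exp (Ft x) + γ⁻¹ * (1 - c / x)) (Icc c x₀) volume :=
    intP1.integrableOn.add intP2
  have intMax : IntegrableOn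
      (fun x => max (ft x + γ⁻¹ * (1 - c / x) * Real.exp (-(Ft x))) 0) (Icc c x₀) volume := by
    refine Integrable.mono' (g := fun x => |ft x| + γ⁻¹ * Real.exp (-(Ft x))) ?_ ?_ ?_
    · exact hfti.abs.integrableOn.add
        ((continuous_const.mul (Real.continuous_exp.comp hFtcont.neg)).integrableOn_Icc)
    · have hm2 : Measurable fun x : ℝ => γ⁻¹ * (1 - c / x) * Real.exp (-(Ft x)) := by
        have : Measurable fun x : ℝ => γ⁻¹ * (1 - c / x) :=
          measurable_const.mul (measurable_const.sub (measurable_const.div measurable_id))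
        exact this.mul (Real.continuous_exp.comp hFtcont.neg).measurable
      have h1 : AEStronglyMeasurable
          (fun x => ft x + γ⁻¹ * (1 - c / x) * Real.exp (-(Ft x)))
          (volume.restrict (Icc c x₀)) :=
        hfti.aestronglyMeasurable.restrict.add hm2.aestronglyMeasurable
      exact h1.sup aestronglyMeasurable_const
    · apply ae_restrict_of_forall_mem measurableSet_Icc
      intro x hx
      have hx0 : 0 < x := hc0.trans_le hx.1
      have h1 : c / x ≤ 1 := (div_le_one hx0).2 hx.1
      have h2 : 0 ≤ c / x := le_of_lt (div_pos hc0 hx0)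
      have h3 : 0 ≤ Real.exp (-(Ft x)) := (Real.exp_pos _).le
      have h4 : ft x + γ⁻¹ * (1 - c / x) * Real.exp (-(Ft x))
          ≤ |ft x| + γ⁻¹ * Real.exp (-(Ft x)) := by
        have h5 : γ⁻¹ * (1 - c / x) * Real.exp (-(Ft x)) ≤ γ⁻¹ * Real.exp (-(Ft x)) := by
          apply mul_le_mul_of_nonneg_right _ h3
          nlinarith [inv_pos.2 hγ]
        linarith [le_abs_self (ft x)]
      have h6 : (0:ℝ) ≤ |ft x| + γ⁻¹ * Real.exp (-(Ft x)) := by positivity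
      rw [Real.norm_eq_abs, abs_of_nonneg (le_max_right _ 0)]
      exact max_le h4 h6
  -- pointwise comparison
  have hpt : ∀ x ∈ Icc c x₀,
      ft x * Real.exp (Ft x) + γ⁻¹ * (1 - c / x)
        ≤ max (ft x + γ⁻¹ * (1 - c / x) * Real.exp (-(Ft x))) 0 := by
    intro x hx
    have he0 : 0 < Real.exp (Ft x) := Real.exp_pos _
    have he1 : Real.exp (Ft x) ≤ 1 := by
      rw [Real.exp_le_one_iff]
      have h0 := hFle x hx
      rw [hFteq x hx] at h0
      exact h0
    have h1 : (ft x + γ⁻¹ * (1 - c / x) * Real.exp (-(Ft x))) * Real.exp (Ft x)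
        = ft x * Real.exp (Ft x) + γ⁻¹ * (1 - c / x) := by
      rw [Real.exp_neg]
      field_simp
    calc ft x * Real.exp (Ft x) + γ⁻¹ * (1 - c / x)
        = (ft x + γ⁻¹ * (1 - c / x) * Real.exp (-(Ft x))) * Real.exp (Ft x) := h1.symm
      _ ≤ max (ft x + γ⁻¹ * (1 - c / x) * Real.exp (-(Ft x))) 0 := max_ge_mul he0 he1
  refine le_trans ?_ (setIntegral_mono_on intL intMax measurableSet_Icc hpt)
  -- compute the lower integral
  rw [integral_add intP1.integrableOn intP2]
  have e1 : (∫ x in Icc c x₀, ft x * Real.exp (Ft x)) = ε / γ - 1 := by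
    rw [integral_Icc_eq_integral_Ioc, ← intervalIntegral.integral_of_le hxb.le]
    rw [exp_integral_key ft hfti c x₀ hxb.le]
    have h7 : (∫ t in c..x₀, ft t) = Real.log (ε / γ) := by
      rw [← hFteq x₀ ⟨hxb.le, le_refl x₀⟩]
      exact hFx₀
    rw [h7, Real.exp_log (div_pos hε0 hγ)]
  have e2 : (∫ x in Icc c x₀, γ⁻¹ * (1 - c / x))
      = γ⁻¹ * (x₀ - c * Real.log x₀) - γ⁻¹ * (c - c * Real.log c) := by
    rw [integral_Icc_eq_integral_Ioc, ← intervalIntegral.integral_of_le hxb.le]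
    exact phi_FTC γ hc0 hxb.le
  rw [e1, e2]
  apply le_of_eq
  have hεx : ε = 1 - x₀ := by rw [hx₀]; ring
  rw [hεx]
  field_simp
  ring

/-- Minimal value of the phase-space cost: under the underlying assumption,
`min_{D_γ} G = (α/(βγ))(log (α/β) - 1 + β/α - log x₀) - 1`; this value is
positive and is strictly decreasing as a function of `γ` on the range where
the underlying assumption holds. -/
theorem minimal_cost_value
    (α β γ ε y₀ x₀ : ℝ) (hα : 0 < α) (hαβ : α < β)
    (hε : ε ∈ Ioo (0:ℝ) 1) (hx₀ : x₀ = 1 - ε) (hy₀ : y₀ = ε)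
    (hγ : 0 < γ) (hεγ : ε < γ) (hxb : α / β < x₀)
    (hpeak : γ < 1 + (α / β) * Real.log (α / (β * (1 - ε))) - α / β)
    (F : (ℝ → ℝ) → ℝ → ℝ)
    (hF : ∀ f x, F f x = ∫ u in (α / β)..x, f u)
    (G : (ℝ → ℝ) → ℝ)
    (hG : ∀ f, G f = ∫ x in Icc (α / β) x₀,
        max (f x + γ⁻¹ * (1 - α / (β * x)) * Real.exp (-(F f x))) 0)
    (D : (ℝ → ℝ) → Prop)
    (hD : ∀ f, D f ↔ (IntegrableOn f (Icc (α / β) x₀) ∧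
        F f x₀ = Real.log (y₀ / γ) ∧
        (∀ x ∈ Icc (α / β) x₀, F f x ≤ 0) ∧
        (∀ᵐ x ∂(volume.restrict (Icc (α / β) x₀)),
          0 ≤ f x + γ⁻¹ * Real.exp (-(F f x))))) :
    IsLeast {c : ℝ | ∃ f, D f ∧ G f = c}
      ((α / (β * γ)) * (Real.log (α / β) - 1 + β / α - Real.log x₀) - 1) ∧
    0 < (α / (β * γ)) * (Real.log (α / β) - 1 + β / α - Real.log x₀) - 1 ∧
    StrictAntiOn
      (fun g : ℝ =>
        (α / (β * g)) * (Real.log (α / β) - 1 + β / α - Real.log x₀) - 1)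
      {g : ℝ | 0 < g ∧
        g < 1 + (α / β) * Real.log (α / (β * (1 - ε))) - α / β} := by
  obtain ⟨hε0, hε1⟩ := hε
  have hβ : 0 < β := hα.trans hαβ
  have hc0 : 0 < α / β := div_pos hα hβ
  have hc1 : α / β < 1 := (div_lt_one hβ).2 hαβ
  have hx₀0 : 0 < x₀ := hc0.trans hxb
  have hx₀1 : x₀ < 1 := by rw [hx₀]; linarith
  have hlog : Real.log (α / (β * (1 - ε))) = Real.log (α / β) - Real.log x₀ := by
    rw [show α / (β * (1 - ε)) = (α / β) / x₀ by rw [hx₀, div_div] ]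
    exact Real.log_div hc0.ne' hx₀0.ne'
  have hpeak' : γ < 1 - α / β + (α / β) * (Real.log (α / β) - Real.log x₀) := by
    rw [hlog] at hpeak; linarith
  have hcmul : (α / β) * (β / α) = 1 := by field_simp
  set M := (α / (β * γ)) * (Real.log (α / β) - 1 + β / α - Real.log x₀) - 1 with hMdef
  have hMeq : M = γ⁻¹ * ((1 - γ - (α / β) * Real.log x₀)
      - (α / β - (α / β) * Real.log (α / β))) := by
    rw [hMdef]
    field_simp
    ring
  -- positivity
  have hMpos : 0 < M := by
    rw [hMeq]
    have h2 : 0 < (1 - γ - (α / β) * Real.log x₀) - (α / β - (α / β) * Real.log (α / β)) := by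
      nlinarith
    exact mul_pos (inv_pos.2 hγ) h2
  -- strict antitonicity
  have hanti : StrictAntiOn
      (fun g : ℝ =>
        (α / (β * g)) * (Real.log (α / β) - 1 + β / α - Real.log x₀) - 1)
      {g : ℝ | 0 < g ∧
        g < 1 + (α / β) * Real.log (α / (β * (1 - ε))) - α / β} := by
    intro g₁ h₁ g₂ h₂ hlt
    simp only [mem_setOf_eq] at h₁ h₂
    have hK : 0 < Real.log (α / β) - 1 + β / α - Real.log x₀ := by
      have hcK : 0 < (α / β) * (Real.log (α / β) - 1 + β / α - Real.log x₀) := by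
        nlinarith
      nlinarith
    have hab : α / (β * g₂) < α / (β * g₁) :=
      div_lt_div_of_pos_left hα (mul_pos hβ h₁.1) (by nlinarith)
    simp only
    have := mul_lt_mul_of_pos_right hab hK
    linarith
  refine ⟨⟨?_, ?_⟩, hMpos, hanti⟩
  · -- membership: exhibit the minimizer
    obtain ⟨fs, hfsint, hfsF, hfsle, hfsnn, hfsG⟩ :=
      minimizer_exists (α / β) γ ε x₀ hc0 hε0 hε1 hx₀ hγ hεγ hxb hpeak'
    refine ⟨fs, (hD fs).2 ⟨hfsint, ?_, ?_, ?_⟩, ?_⟩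
    · rw [hF, hy₀]; exact hfsF
    · intro x hx; rw [hF]; exact hfsle x hx
    · apply ae_restrict_of_forall_mem measurableSet_Icc
      intro x hx
      rw [hF]
      exact hfsnn x hx
    · rw [hG]
      have hcongr : ∀ x ∈ Icc (α / β) x₀,
          max (fs x + γ⁻¹ * (1 - α / (β * x)) * Real.exp (-(F fs x))) 0
            = max (fs x + γ⁻¹ * (1 - (α / β) / x)
                * Real.exp (-(∫ u in (α / β)..x, fs u))) 0 := by
        intro x _
        rw [hF, div_div]
      rw [setIntegral_congr_fun measurableSet_Icc hcongr, hfsG, hMeq]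
  · -- lower bound
    rintro m ⟨f, hDf, hGm⟩
    rw [hD] at hDf
    obtain ⟨hint, hFx₀, hFle, -⟩ := hDf
    subst hGm
    rw [hG, hMeq]
    have hcongr : ∀ x ∈ Icc (α / β) x₀,
        max (f x + γ⁻¹ * (1 - α / (β * x)) * Real.exp (-(F f x))) 0
          = max (f x + γ⁻¹ * (1 - (α / β) / x)
              * Real.exp (-(∫ u in (α / β)..x, f u))) 0 := by
      intro x _
      rw [hF, div_div]
    rw [setIntegral_congr_fun measurableSet_Icc hcongr]
    apply lower_bound_key (α / β) γ ε x₀ hc0 hε0 hx₀ hγ hxb f hint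
    · rw [hF, hy₀] at hFx₀; exact hFx₀
    · intro x hx
      have := hFle x hx
      rwa [hF] at this
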